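/- Let P be an (s,t)-path in a directed graph G, let p be the smallest index such that the layer L_p contains more than one vertex of P, and let u be the first vertex of P lying in L_p. Then the prefix subpath of P from s to u is a shortest (s,u)-path, i.e., it has length dist_G(s,u) = p. -/

import Mathlib

variable {V : Type*}

/-- `l` is a (nonempty) directed walk in the digraph `G`. -/
def IsWalk (G : V → V → Prop) : List V → Prop
  | [] => False
  | [_] => True
  | a :: b :: l => G a b ∧ IsWalk G (b :: l)

/-- `l` is a simple directed path in `G`. -/
def IsPath (G : V → V → Prop) (l : List V) : Prop := IsWalk G l ∧ l.Nodup

/-- `l` is a walk from `s` to `t` in `G`. -/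
def IsWalkFrom (G : V → V → Prop) (s t : V) (l : List V) : Prop :=
  IsWalk G l ∧ l.head? = some s ∧ l.getLast? = some t

/-- `l` is a simple path from `s` to `t` in `G`. -/
def IsPathFrom (G : V → V → Prop) (s t : V) (l : List V) : Prop :=
  IsPath G l ∧ l.head? = some s ∧ l.getLast? = some t

/-- The length (number of edges) of a path given as a vertex list. -/
def pathLen (l : List V) : ℕ := l.length - 1

/-- Directed shortest-path distance (`⊤` if unreachable). -/
noncomputable def ddist (G : V → V → Prop) (s t : V) : ℕ∞ :=
  sInf {n : ℕ∞ | ∃ l, IsPathFrom G s t l ∧ (pathLen l : ℕ∞) = n}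

section Aux

variable {G : V → V → Prop} {s t a b : V} {l : List V}

lemma isWalk_iff : ∀ {l : List V}, IsWalk G l ↔ l ≠ [] ∧ l.IsChain G
  | [] => by simp [IsWalk]
  | [a] => by simp [IsWalk]
  | a :: b :: l => by
    rw [IsWalk, isWalk_iff, List.isChain_cons_cons]
    exact ⟨fun h => ⟨by simp, h.1, h.2.2⟩, fun h => ⟨h.2.1, by simp, h.2.2⟩⟩

lemma isPathFrom_take {P : List V} (hP : IsPathFrom G s t P) {i : ℕ} (hi : i < P.length) :
    IsPathFrom G s (P.getD i s) (P.take (i+1)) := by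
  obtain ⟨⟨hw, hnd⟩, hh, _⟩ := hP
  rw [isWalk_iff] at hw
  have hlen : (P.take (i+1)).length = i + 1 := by
    rw [List.length_take]; omega
  refine ⟨⟨isWalk_iff.mpr ⟨?_, hw.2.take _⟩, hnd.sublist (List.take_sublist _ _)⟩, ?_, ?_⟩
  · intro h
    rw [h] at hlen; simp at hlen
  · cases P with
    | nil => simp at hi
    | cons a P' => simpa [List.take_succ_cons] using hh
  · rw [List.getLast?_eq_getElem?, hlen, Nat.add_sub_cancel, List.getElem?_take,
      if_pos (by omega), List.getElem?_eq_getElem hi, List.getD_eq_getElem _ _ hi]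

lemma ddist_le_pathLen (h : IsPathFrom G s t l) : ddist G s t ≤ (pathLen l : ℕ∞) :=
  sInf_le ⟨l, h, rfl⟩

lemma ddist_exists (h : ddist G s t ≠ ⊤) :
    ∃ l, IsPathFrom G s t l ∧ (pathLen l : ℕ∞) = ddist G s t := by
  have hne : {n : ℕ∞ | ∃ l, IsPathFrom G s t l ∧ (pathLen l : ℕ∞) = n}.Nonempty := by
    by_contra h'
    rw [Set.not_nonempty_iff_eq_empty] at h'
    rw [ddist, h'] at h
    simp at h
  exact csInf_mem hne

lemma ddist_step (hab : G a b) : ddist G s b ≤ ddist G s a + 1 := by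
  classical
  rcases eq_or_ne (ddist G s a) ⊤ with h | h
  · simp [h]
  obtain ⟨l, hl, hlen⟩ := ddist_exists h
  rw [← hlen]
  have hlne : l ≠ [] := by
    intro h'; rw [h'] at hl; simp [IsPathFrom] at hl
  by_cases hb : b ∈ l
  · set j := l.idxOf b with hj
    have hjl : j < l.length := List.idxOf_lt_length_iff.mpr hb
    have hp := isPathFrom_take hl hjl
    have hgb : l.getD j s = b := by
      rw [List.getD_eq_getElem _ _ hjl]; exact List.getElem_idxOf hjl
    rw [hgb] at hp
    refine le_trans (ddist_le_pathLen hp) ?_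
    have : pathLen (l.take (j+1)) ≤ pathLen l + 1 := by
      simp only [pathLen, List.length_take]
      omega
    exact_mod_cast this
  · have hp : IsPathFrom G s b (l ++ [b]) := by
      obtain ⟨⟨hw, hnd⟩, hh, hlast⟩ := hl
      rw [isWalk_iff] at hw
      refine ⟨⟨isWalk_iff.mpr ⟨by simp, ?_⟩, ?_⟩, ?_, List.getLast?_concat⟩
      · rw [List.isChain_append]
        refine ⟨hw.2, List.isChain_singleton _, ?_⟩
        intro x hx y hy
        rw [hlast] at hx
        simp at hx hy
        rw [← hx, ← hy]; exact hab
      · rw [List.nodup_append]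
        exact ⟨hnd, List.nodup_singleton _, by simpa using fun a (ha : a ∈ l) (h : a = b) => hb (h ▸ ha)⟩
      · rw [List.head?_append, hh]; rfl
    refine le_trans (ddist_le_pathLen hp) ?_
    have h1 : 1 ≤ l.length := by
      cases l; · exact absurd rfl hlne
      · simp
    have : pathLen (l ++ [b]) = pathLen l + 1 := by
      simp only [pathLen, List.length_append, List.length_singleton]
      omega
    rw [this]
    push_cast
    rfl

end Aux

theorem stmt_1 (G : V → V → Prop) (s t : V) (P : List V) (p i : ℕ)
    (hP : IsPathFrom G s t P)
    (hlong : ddist G s t < (pathLen P : ℕ∞))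
    (hpmul : ∃ a ∈ P, ∃ b ∈ P, a ≠ b ∧ ddist G s a = (p : ℕ∞) ∧ ddist G s b = (p : ℕ∞))
    (hpmin : ∀ q : ℕ, q < p →
      ¬ ∃ a ∈ P, ∃ b ∈ P, a ≠ b ∧ ddist G s a = (q : ℕ∞) ∧ ddist G s b = (q : ℕ∞))
    (hi : i < P.length)
    (hiu : ddist G s (P.getD i s) = (p : ℕ∞))
    (hifirst : ∀ m < i, ddist G s (P.getD m s) ≠ (p : ℕ∞)) :
    IsPathFrom G s (P.getD i s) (P.take (i+1)) ∧
    (pathLen (P.take (i+1)) : ℕ∞) = ddist G s (P.getD i s) ∧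
    pathLen (P.take (i+1)) = p := by
  have hd_le : ∀ m, m < P.length → ddist G s (P.getD m s) ≤ (m : ℕ∞) := by
    intro m hm
    have h1 := ddist_le_pathLen (isPathFrom_take hP hm)
    have hlen : pathLen (P.take (m+1)) = m := by
      simp only [pathLen, List.length_take]; omega
    rwa [hlen] at h1
  have hpi : p ≤ i := by
    have := hd_le i hi
    rw [hiu] at this
    exact_mod_cast this
  have hstep : ∀ m, m + 1 < P.length →
      ddist G s (P.getD (m+1) s) ≤ ddist G s (P.getD m s) + 1 := by
    intro m hm
    apply ddist_step
    have hc := (isWalk_iff.mp hP.1.1).2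
    rw [List.isChain_iff_getElem] at hc
    have h2 := hc m (by omega)
    rw [List.getD_eq_getElem _ _ (by omega : m < P.length), List.getD_eq_getElem _ _ hm]
    simpa using h2
  have hd0 : ddist G s (P.getD 0 s) = 0 := by
    have h0 : P.getD 0 s = s := by
      cases P with
      | nil => simp at hi
      | cons a P' =>
        have := hP.2.1
        simp at this
        simp [this]
    rw [h0]
    have hle : ddist G s s ≤ (pathLen [s] : ℕ∞) :=
      ddist_le_pathLen ⟨⟨trivial, List.nodup_singleton _⟩, rfl, rfl⟩
    simpa [pathLen] using hle
  have hlt : ∀ m, m < i → ddist G s (P.getD m s) < (p : ℕ∞) := by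
    intro m
    induction m with
    | zero =>
      intro hm
      have hne := hifirst 0 hm
      rw [hd0] at hne ⊢
      have hp0 : p ≠ 0 := by
        intro h; apply hne; rw [h]; rfl
      exact_mod_cast Nat.pos_of_ne_zero hp0
    | succ m ih =>
      intro hm
      have h1 := hstep m (by omega)
      have h2 := ih (by omega)
      have h3 := hifirst (m+1) hm
      have hne : ddist G s (P.getD m s) ≠ ⊤ := (h2.trans (by simp)).ne
      have h4 : ddist G s (P.getD m s) + 1 ≤ (p : ℕ∞) := (ENat.add_one_le_iff hne).mpr h2
      exact lt_of_le_of_ne (h1.trans h4) h3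
  have hip : i ≤ p := by
    have htn : ∀ m : Fin i, (ddist G s (P.getD m s)).toNat < p := by
      intro m
      have h2 := hlt m m.2
      have hne : ddist G s (P.getD m s) ≠ ⊤ := (h2.trans (by simp)).ne
      rw [← ENat.coe_toNat hne] at h2
      exact_mod_cast h2
    have inj : Function.Injective
        (fun m : Fin i => (⟨(ddist G s (P.getD (m : ℕ) s)).toNat, htn m⟩ : Fin p)) := by
      intro m1 m2 hmm
      simp only [Fin.mk.injEq] at hmm
      have hm1 : (m1 : ℕ) < P.length := by omega
      have hm2 : (m2 : ℕ) < P.length := by omega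
      have hne1 : ddist G s (P.getD (m1 : ℕ) s) ≠ ⊤ := ((hlt _ m1.2).trans (by simp)).ne
      have hne2 : ddist G s (P.getD (m2 : ℕ) s) ≠ ⊤ := ((hlt _ m2.2).trans (by simp)).ne
      have heq : ddist G s (P.getD (m1 : ℕ) s) = ddist G s (P.getD (m2 : ℕ) s) := by
        rw [← ENat.coe_toNat hne1, ← ENat.coe_toNat hne2, hmm]
      by_contra hne
      have hvne : P.getD (m1 : ℕ) s ≠ P.getD (m2 : ℕ) s := by
        rw [List.getD_eq_getElem _ _ hm1, List.getD_eq_getElem _ _ hm2]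
        intro h
        exact hne (Fin.ext ((hP.1.2.getElem_inj_iff).mp h))
      refine hpmin (ddist G s (P.getD (m1 : ℕ) s)).toNat ?_ ?_
      · exact htn m1
      · refine ⟨P.getD (m1 : ℕ) s, ?_, P.getD (m2 : ℕ) s, ?_, hvne, ?_, ?_⟩
        · rw [List.getD_eq_getElem _ _ hm1]; exact List.getElem_mem _
        · rw [List.getD_eq_getElem _ _ hm2]; exact List.getElem_mem _
        · rw [ENat.coe_toNat hne1]
        · rw [← heq, ENat.coe_toNat hne1]
    have := Fintype.card_le_of_injective _ inj
    simpa using this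
  have hipeq : i = p := le_antisymm hip hpi
  have hplen : pathLen (P.take (i+1)) = i := by
    simp only [pathLen, List.length_take]; omega
  refine ⟨isPathFrom_take hP hi, ?_, ?_⟩
  · rw [hiu, hplen, hipeq]
  · rw [hplen, hipeq]
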